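/- Let (B, L) be a Banach SNL space with Banach SNL dual (B*, L̃), A a norm-closed linear L-positive subspace of B, and suppose for all d* ∈ B*, inf_{d ∈ B} [q_{L̃}(d* − Ld) + (1/2)‖d* − Ld‖²] ≤ 0. Then the following are equivalent: (i) A⁰ is L̃-negative; (ii) for all d* ∈ B*, inf_{a ∈ A} q_{L̃}(d* − La) ≤ 0; (iii) for all d* ∈ A⁰, inf_{a ∈ A} q_{L̃}(d* − La) ≤ 0. Moreover each of these implies that A is maximally L-positive. -/

import Mathlib

set_option maxHeartbeats 1000000


open NormedSpace

noncomputable def qL {B : Type*} [NormedAddCommGroup B] [NormedSpace ℝ B]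
    (L : B →L[ℝ] StrongDual ℝ B) (b : B) : ℝ := (1 / 2) * L b b

def LPositive {B : Type*} [NormedAddCommGroup B] [NormedSpace ℝ B]
    (L : B →L[ℝ] StrongDual ℝ B) (A : Set B) : Prop :=
  A.Nonempty ∧ ∀ b ∈ A, ∀ c ∈ A, 0 ≤ qL L (b - c)

def MaxLPositive {B : Type*} [NormedAddCommGroup B] [NormedSpace ℝ B]
    (L : B →L[ℝ] StrongDual ℝ B) (A : Set B) : Prop :=
  LPositive L A ∧ ∀ A' : Set B, LPositive L A' → A ⊆ A' → A' = A

section Aux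

variable {B : Type*} [NormedAddCommGroup B] [NormedSpace ℝ B]
variable (L : B →L[ℝ] StrongDual ℝ B)

lemma qL_add (hsym : ∀ p q : B, L q p = L p q) (p r : B) :
    qL L (p + r) = qL L p + L p r + qL L r := by
  have h := hsym p r
  simp only [qL, map_add, ContinuousLinearMap.add_apply]
  rw [h]; ring

lemma qL_sub (hsym : ∀ p q : B, L q p = L p q) (p r : B) :
    qL L (p - r) = qL L p - L p r + qL L r := by
  have h := hsym p r
  simp only [qL, map_sub, ContinuousLinearMap.sub_apply]
  rw [h]; ring

lemma qL_smul (t : ℝ) (v : B) : qL L (t • v) = t ^ 2 * qL L v := by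
  simp only [qL, map_smul, ContinuousLinearMap.smul_apply, smul_eq_mul]
  ring

lemma qL_neg (v : B) : qL L (-v) = qL L v := by
  have := qL_smul L (-1 : ℝ) v
  simpa using this

lemma qL_abs_le (hL : ‖L‖ ≤ 1) (v : B) : |qL L v| ≤ (1 / 2) * ‖v‖ ^ 2 := by
  have h1 : ‖L v v‖ ≤ ‖L v‖ * ‖v‖ := (L v).le_opNorm v
  have h2 : ‖L v‖ ≤ ‖L‖ * ‖v‖ := L.le_opNorm v
  have h3 : ‖L‖ * ‖v‖ ≤ 1 * ‖v‖ := by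
    apply mul_le_mul_of_nonneg_right hL (norm_nonneg v)
  have h4 : ‖L v v‖ ≤ ‖v‖ * ‖v‖ := by nlinarith [norm_nonneg (L v), norm_nonneg v]
  rw [Real.norm_eq_abs] at h4
  rw [qL, abs_mul]
  rw [show |(1:ℝ)/2| = 1/2 by norm_num]
  nlinarith [sq_abs (L v v), sq_nonneg ‖v‖]

lemma pair_abs_le (hL : ‖L‖ ≤ 1) (p r : B) : |L p r| ≤ ‖p‖ * ‖r‖ := by
  have h1 : ‖L p r‖ ≤ ‖L p‖ * ‖r‖ := (L p).le_opNorm r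
  have h2 : ‖L p‖ ≤ ‖L‖ * ‖p‖ := L.le_opNorm p
  have h3 : ‖L‖ * ‖p‖ ≤ 1 * ‖p‖ :=
    mul_le_mul_of_nonneg_right hL (norm_nonneg p)
  rw [Real.norm_eq_abs] at h1
  nlinarith [norm_nonneg r, norm_nonneg p, norm_nonneg (L p)]

lemma arith_quad {X t u M : ℝ} (hX : 0 ≤ X) (hu : 0 ≤ u)
    (h1 : X ^ 2 ≤ M + 2 * t * X) (h2 : u ^ 2 = t ^ 2 + M) : X ≤ t + u := by
  nlinarith [sq_nonneg (X - t - u), sq_nonneg (X - t + u)]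

lemma arith_final {qb LT sa0 qe t D S : ℝ} (h1 : qb ≤ 0) (h2 : LT ≤ D * (2 * t))
    (h3 : -sa0 ≤ 2 * t * (t + S)) (h4 : -qe ≤ 2 * t ^ 2) (ht : 0 < t) (ht1 : t ≤ 1) :
    qb + LT - sa0 - qe ≤ t * (2 * D + 4 + 2 * S) := by nlinarith

lemma arith_sq_le {t : ℝ} (h0 : 0 ≤ t) (h1 : t ≤ 1) : t ^ 2 ≤ 1 := by nlinarith

lemma arith_qe {q e t : ℝ} (h : |q| ≤ 1 / 2 * e ^ 2) (h2 : e ≤ 2 * t) (he : 0 ≤ e) :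
    -q ≤ 2 * t ^ 2 := by nlinarith [neg_abs_le q]

lemma arith_LT {LT D e t : ℝ} (h : |LT| ≤ D * e) (h2 : e ≤ 2 * t) (hD : 0 ≤ D) :
    LT ≤ D * (2 * t) := by nlinarith [le_abs_self LT]

lemma arith_c1 {sa0 t X S : ℝ} (h1 : -sa0 ≤ 2 * t * X) (h2 : X ≤ t + S) (ht : 0 ≤ t) :
    -sa0 ≤ 2 * t * (t + S) := by nlinarith

end Aux

/-- The main analytic lemma: if the annihilator of `A` is `L̃`-negative, then
`inf_{a ∈ A} q_{L̃}(d' - L a) ≤ 0` for every `d'`. -/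
lemma main_ineq
    {B : Type*} [NormedAddCommGroup B] [NormedSpace ℝ B]
    (L : B →L[ℝ] StrongDual ℝ B) (hL : ‖L‖ ≤ 1)
    (Lt : StrongDual ℝ B →L[ℝ] StrongDual ℝ (StrongDual ℝ B)) (hLt : @Norm.norm _ (@ContinuousLinearMap.hasOpNorm ℝ ℝ (StrongDual ℝ B) (StrongDual ℝ (StrongDual ℝ B)) _ _ _ _ _ _ (RingHom.id ℝ)) Lt ≤ 1)
    (hsymt : ∀ p q : StrongDual ℝ B, Lt q p = Lt p q)
    (hdual : ∀ b : B, Lt (L b) = inclusionInDoubleDual ℝ B b)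
    (A : Subspace ℝ B)
    (hpos : ∀ a ∈ A, 0 ≤ qL L a)
    (hneg : ∀ b' : StrongDual ℝ B, (∀ a ∈ A, b' a = 0) → qL Lt b' ≤ 0)
    (d' : StrongDual ℝ B) : ⨅ a : A, qL Lt (d' - L a) ≤ 0 := by
  haveI : Nonempty A := ⟨0⟩
  have LtL : ∀ (x : B) (r : StrongDual ℝ B), Lt (L x) r = r x := by
    intro x r; rw [hdual x]; rfl
  have LtL' : ∀ (p : StrongDual ℝ B) (x : B), Lt p (L x) = p x := by
    intro p x; rw [hsymt (L x) p, LtL]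
  have hqLL : ∀ x : B, qL Lt (L x) = qL L x := by
    intro x; rw [qL, qL, LtL]
  have hexpand : ∀ (p : StrongDual ℝ B) (x : B), qL Lt (p - L x) = qL Lt p - p x + qL L x := by
    intro p x; rw [qL_sub Lt hsymt, LtL' p x, hqLL]
  by_cases hbd : BddBelow (Set.range fun a : A => qL Lt (d' - L (a : B)))
  swap
  · rw [Real.iInf_of_not_bddBelow hbd]
  set m := ⨅ a : A, qL Lt (d' - L (a : B)) with hm
  clear_value m
  set M := qL Lt d' - m with hMdef
  clear_value M
  have hm_le_d' : m ≤ qL Lt d' := by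
    have h0 := ciInf_le hbd (0 : A)
    rw [← hm] at h0
    simpa using h0
  have hMnn : 0 ≤ M := by rw [hMdef]; linarith
  set K := 2 * ‖d'‖ + 4 + 2 * Real.sqrt (1 + M) with hK
  clear_value K
  have hKpos : 0 < K := by
    have := Real.sqrt_nonneg (1 + M)
    have := norm_nonneg d'
    rw [hK]; linarith
  have key : ∀ t : ℝ, 0 < t → t ≤ 1 → m ≤ t * K := by
    intro t ht ht1
    have ht2 : (0:ℝ) < t ^ 2 := by positivity
    obtain ⟨a₀s, ha₀s⟩ := exists_lt_of_ciInf_lt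
      (show (⨅ a : A, qL Lt (d' - L (a : B))) < m + t ^ 2 by rw [← hm]; linarith)
    set a0 := (a₀s : B) with ha0eq
    have ha0 : a0 ∈ A := by rw [ha0eq]; exact a₀s.2
    clear_value a0
    set s' := d' - L a0 with hs'
    clear_value s'
    -- ha₀s : qL Lt s' < m + t ^ 2
    have grad : ∀ v ∈ A, ∀ r : ℝ, r * s' v ≤ t ^ 2 + r ^ 2 * qL L v := by
      intro v hv r
      have hmem : a0 + r • v ∈ A := A.add_mem ha0 (A.smul_mem r hv)
      have h1 := ciInf_le hbd (⟨a0 + r • v, hmem⟩ : A)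
      rw [← hm] at h1
      have heq : d' - L ((⟨a0 + r • v, hmem⟩ : A) : B) = s' - L (r • v) := by
        simp only [hs']
        rw [map_add]
        abel
      rw [heq, hexpand s' (r • v), qL_smul L r v] at h1
      have h2 : s' (r • v) = r * s' v := by
        rw [map_smul]; rfl
      rw [h2] at h1
      linarith
    have grad2 : ∀ v ∈ A, s' v ≤ 2 * t * Real.sqrt (qL L v) := by
      intro v hv
      rcases eq_or_lt_of_le (hpos v hv) with hq0 | hqpos
      · by_contra hcon
        push_neg at hcon
        have hge0 : (0:ℝ) ≤ 2 * t * Real.sqrt (qL L v) := by positivity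
        have hsv : 0 < s' v := lt_of_le_of_lt hge0 hcon
        have hg := grad v hv ((t ^ 2 + 1) / s' v)
        rw [← hq0, mul_zero] at hg
        rw [div_mul_cancel₀ _ (ne_of_gt hsv)] at hg
        linarith
      · set s := Real.sqrt (qL L v) with hsdef
        have hspos : 0 < s := by rw [hsdef]; exact Real.sqrt_pos.mpr hqpos
        have hs2 : s ^ 2 = qL L v := by rw [hsdef]; exact Real.sq_sqrt hqpos.le
        clear_value s
        have hg := grad v hv (t / s)
        have hr2 : (t / s) ^ 2 * qL L v = t ^ 2 := by
          rw [div_pow, ← hs2]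
          field_simp
        rw [hr2] at hg
        have hst : 0 < s / t := div_pos hspos ht
        have h3 := mul_le_mul_of_nonneg_left hg hst.le
        calc s' v = (s / t) * ((t / s) * s' v) := by field_simp
        _ ≤ (s / t) * (t ^ 2 + t ^ 2) := h3
        _ = 2 * t * s := by field_simp; ring
    have gradabs : ∀ v ∈ A, |s' v| ≤ 2 * t * Real.sqrt (qL L v) := by
      intro v hv
      rw [abs_le]
      constructor
      · have h1 := grad2 (-v) (A.neg_mem hv)
        rw [map_neg, qL_neg] at h1
        linarith
      · exact grad2 v hv
    have hsqrt_le : ∀ v : B, Real.sqrt (qL L v) ≤ ‖v‖ := by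
      intro v
      have h1 := qL_abs_le L hL v
      have h2 : qL L v ≤ ‖v‖ ^ 2 := by
        have := le_abs_self (qL L v)
        nlinarith [sq_nonneg ‖v‖]
      calc Real.sqrt (qL L v) ≤ Real.sqrt (‖v‖ ^ 2) := Real.sqrt_le_sqrt h2
      _ = ‖v‖ := Real.sqrt_sq (norm_nonneg v)
    -- Hahn-Banach extension of the restriction of s' to A
    set fA : A →L[ℝ] ℝ := s'.comp A.subtypeL with hfA
    clear_value fA
    have hfA_apply : ∀ x : A, fA x = s' (x : B) := by
      intro x
      rw [hfA, ContinuousLinearMap.comp_apply, Submodule.subtypeL_apply]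
    have hfA_bound : ‖fA‖ ≤ 2 * t := by
      apply ContinuousLinearMap.opNorm_le_bound _ (by positivity)
      intro x
      rw [hfA_apply, Real.norm_eq_abs, Submodule.coe_norm]
      have h1 := gradabs (x : B) x.2
      have h2 := hsqrt_le (x : B)
      nlinarith [Real.sqrt_nonneg (qL L (x : B))]
    obtain ⟨e', he'ext, he'norm⟩ := exists_extension_norm_eq A fA
    have he'A : ∀ a ∈ A, e' a = s' a := by
      intro a ha
      have := he'ext ⟨a, ha⟩
      rwa [hfA_apply] at this
    have he'n : ‖e'‖ ≤ 2 * t := by rw [he'norm]; exact hfA_bound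
    set b' := s' - e' with hb'
    clear_value b'
    have hb'0 : ∀ a ∈ A, b' a = 0 := by
      intro a ha
      rw [hb', ContinuousLinearMap.sub_apply, he'A a ha, sub_self]
    have hqb' : qL Lt b' ≤ 0 := hneg b' hb'0
    -- key identity
    have e1 : Lt b' e' = Lt s' e' - Lt e' e' := by
      rw [hb', map_sub, ContinuousLinearMap.sub_apply]
    have e2 : Lt s' e' = Lt d' e' - e' a0 := by
      rw [hs', map_sub, ContinuousLinearMap.sub_apply, LtL a0 e']
    have e3 : e' a0 = s' a0 := he'A a0 ha0
    have e4 : Lt e' e' = 2 * qL Lt e' := by rw [qL]; ring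
    have hid : qL Lt s' = qL Lt b' + Lt d' e' - s' a0 - qL Lt e' := by
      have h1 : b' + e' = s' := by rw [hb']; abel
      conv_lhs => rw [← h1]
      rw [qL_add Lt hsymt b' e', e1, e2, e3, e4]
      ring
    -- bounds
    have hLtd'e' : Lt d' e' ≤ ‖d'‖ * (2 * t) :=
      arith_LT (pair_abs_le Lt hLt d' e') he'n (norm_nonneg d')
    have hqe' : -qL Lt e' ≤ 2 * t ^ 2 :=
      arith_qe (qL_abs_le Lt hLt e') he'n (norm_nonneg e')
    have hqa0nn : 0 ≤ qL L a0 := hpos a0 ha0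
    have hs'a0 : -s' a0 ≤ 2 * t * Real.sqrt (qL L a0) :=
      (neg_le_abs (s' a0)).trans (gradabs a0 ha0)
    have hm1 : m ≤ qL Lt s' := by
      have h := ciInf_le hbd a₀s
      rw [← hm] at h
      rwa [← ha0eq, ← hs'] at h
    have hqa0 : qL L a0 ≤ M + 2 * t * Real.sqrt (qL L a0) := by
      have hE : qL Lt s' = qL Lt d' - d' a0 + qL L a0 := by
        rw [hs']; exact hexpand d' a0
      have hsa : s' a0 = d' a0 - 2 * qL L a0 := by
        rw [hs', ContinuousLinearMap.sub_apply, qL]; ring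
      have h2 : d' a0 - qL L a0 ≤ M := by rw [hMdef]; linarith only [hE, hm1]
      linarith only [hsa, h2, hs'a0]
    have hXle : Real.sqrt (qL L a0) ≤ t + Real.sqrt (t ^ 2 + M) := by
      set X := Real.sqrt (qL L a0) with hX
      have hXnn : 0 ≤ X := by rw [hX]; exact Real.sqrt_nonneg _
      have hX2 : X ^ 2 = qL L a0 := by rw [hX]; exact Real.sq_sqrt hqa0nn
      clear_value X
      set u := Real.sqrt (t ^ 2 + M) with hu
      have hunn : 0 ≤ u := by rw [hu]; exact Real.sqrt_nonneg _
      have hu2 : u ^ 2 = t ^ 2 + M := by rw [hu]; exact Real.sq_sqrt (by positivity)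
      clear_value u
      exact arith_quad hXnn hunn (by rw [hX2]; exact hqa0) hu2
    have htsq : t ^ 2 + M ≤ 1 + M := by linarith only [arith_sq_le ht.le ht1]
    have hsqrtMono : Real.sqrt (t ^ 2 + M) ≤ Real.sqrt (1 + M) :=
      Real.sqrt_le_sqrt htsq
    have c1 : -s' a0 ≤ 2 * t * (t + Real.sqrt (1 + M)) :=
      arith_c1 hs'a0 (by linarith only [hXle, hsqrtMono]) ht.le
    have final : qL Lt s' ≤ t * K := by
      rw [hid, hK]
      exact arith_final hqb' hLtd'e' c1 hqe' ht ht1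
    linarith only [hm1, final]
  by_contra hm0
  push_neg at hm0
  have hmin : 0 < min 1 (m / (2 * K)) :=
    lt_min one_pos (div_pos hm0 (by linarith only [hKpos]))
  have h1 := key _ hmin (min_le_left _ _)
  have h2 : min 1 (m / (2 * K)) * K ≤ (m / (2 * K)) * K :=
    mul_le_mul_of_nonneg_right (min_le_right _ _) hKpos.le
  have h3 : (m / (2 * K)) * K = m / 2 := by
    have hKne : K ≠ 0 := ne_of_gt hKpos
    field_simp
  linarith

lemma arith_pos {c Q : ℝ} (hc : 0 < c)
    (h : ∀ t : ℝ, 0 < t → t * c + t ^ 2 * Q ≤ 0) : False := by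
  rcases le_or_gt 0 Q with hQ | hQ
  · have := h 1 one_pos; nlinarith
  · have hc2 : 0 < c / (2 * -Q) := div_pos hc (by linarith)
    set t := min 1 (c / (2 * -Q)) with htdef
    have ht : 0 < t := lt_min one_pos hc2
    have ht2 : t ≤ c / (2 * -Q) := min_le_right _ _
    have h3 : t * (2 * -Q) ≤ c := (le_div_iff₀ (by linarith)).mp ht2
    nlinarith [h t ht, mul_le_mul_of_nonneg_left h3 ht.le, mul_pos ht hc]

theorem stmt15 {B : Type*} [NormedAddCommGroup B] [NormedSpace ℝ B] [CompleteSpace B]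
    [Nontrivial B]
    (L : B →L[ℝ] StrongDual ℝ B) (hL : ‖L‖ ≤ 1)
    (hsym : ∀ b c : B, L c b = L b c)
    (Lt : StrongDual ℝ B →L[ℝ] StrongDual ℝ (StrongDual ℝ B)) (hLt : @Norm.norm _ (@ContinuousLinearMap.hasOpNorm ℝ ℝ (StrongDual ℝ B) (StrongDual ℝ (StrongDual ℝ B)) _ _ _ _ _ _ (RingHom.id ℝ)) Lt ≤ 1)
    (hsymt : ∀ p q : StrongDual ℝ B, Lt q p = Lt p q)
    (hdual : ∀ b : B, Lt (L b) = inclusionInDoubleDual ℝ B b)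
    (A : Subspace ℝ B) (hclosed : IsClosed (A : Set B))
    (hpos : ∀ a ∈ A, 0 ≤ qL L a)
    -- hypothesis (17)
    (h17 : ∀ d' : StrongDual ℝ B,
      ⨅ d : B, (qL Lt (d' - L d) + (1 / 2) * ‖d' - L d‖ ^ 2) ≤ 0) :
    -- (i) ↔ (ii)
    ((∀ b' : StrongDual ℝ B, (∀ a ∈ A, b' a = 0) → qL Lt b' ≤ 0) ↔
      (∀ d' : StrongDual ℝ B, ⨅ a : A, qL Lt (d' - L a) ≤ 0)) ∧
    -- (ii) ↔ (iii)
    ((∀ d' : StrongDual ℝ B, ⨅ a : A, qL Lt (d' - L a) ≤ 0) ↔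
      (∀ d' : StrongDual ℝ B, (∀ a ∈ A, d' a = 0) → ⨅ a : A, qL Lt (d' - L a) ≤ 0)) ∧
    -- (i) → A is maximally L-positive
    ((∀ b' : StrongDual ℝ B, (∀ a ∈ A, b' a = 0) → qL Lt b' ≤ 0) →
      MaxLPositive L (A : Set B)) := by
  haveI : Nonempty A := ⟨0⟩
  have LtL : ∀ (x : B) (r : StrongDual ℝ B), Lt (L x) r = r x := by
    intro x r; rw [hdual x]; rfl
  have hqLL : ∀ x : B, qL Lt (L x) = qL L x := by
    intro x; rw [qL, qL, LtL]
  have hexpand : ∀ (p : StrongDual ℝ B) (x : B),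
      qL Lt (p - L x) = qL Lt p - p x + qL L x := by
    intro p x
    rw [qL_sub Lt hsymt, hsymt (L x) p, LtL, hqLL]
  have hInfNeg : ∀ b' : StrongDual ℝ B, (∀ a ∈ A, b' a = 0) →
      (⨅ a : A, qL Lt (b' - L a)) ≤ 0 → qL Lt b' ≤ 0 := by
    intro b' hb' hinf
    have hlow : ∀ a : A, qL Lt b' ≤ qL Lt (b' - L (a : B)) := by
      intro a
      rw [hexpand b' (a : B), hb' (a : B) a.2]
      have := hpos (a : B) a.2
      linarith
    exact (le_ciInf hlow).trans hinf
  have hMain : (∀ b' : StrongDual ℝ B, (∀ a ∈ A, b' a = 0) → qL Lt b' ≤ 0) →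
      ∀ d' : StrongDual ℝ B, ⨅ a : A, qL Lt (d' - L a) ≤ 0 :=
    fun hi d' => main_ineq L hL Lt hLt hsymt hdual A hpos hi d'
  refine ⟨⟨hMain, fun hii b' hb' => hInfNeg b' hb' (hii b')⟩,
    ⟨fun hii d' _ => hii d',
     fun hiii d' => hMain (fun b' hb' => hInfNeg b' hb' (hiii b' hb')) d'⟩, ?_⟩
  intro hi
  have hii := hMain hi
  constructor
  · exact ⟨⟨0, A.zero_mem⟩, fun b hb c hc => hpos _ (A.sub_mem hb hc)⟩
  · intro A' hA' hsub
    refine Set.Subset.antisymm (fun c hc => ?_) hsub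
    by_contra hcA
    obtain ⟨b₀, u, hbu, hub⟩ := geometric_hahn_banach_closed_point A.convex hclosed hcA
    have hb0A : ∀ a ∈ A, b₀ a = 0 := by
      intro a ha
      by_contra hne
      have hmem : ((|u| + 1) / b₀ a) • a ∈ A := A.smul_mem _ ha
      have h := hbu _ hmem
      rw [map_smul, smul_eq_mul, div_mul_cancel₀ _ hne] at h
      have := le_abs_self u
      linarith
    have hu0 : 0 < u := by
      have h := hbu 0 A.zero_mem
      simpa using h
    have hbc : 0 < b₀ c := lt_trans hu0 hub
    have hposc : ∀ a ∈ A, 0 ≤ qL L (c - a) := fun a ha => hA'.2 c hc a (hsub ha)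
    have key : ∀ t : ℝ, 0 < t → t * b₀ c + t ^ 2 * qL Lt b₀ ≤ 0 := by
      intro t ht
      have h1 : ∀ a : A,
          t * b₀ c + t ^ 2 * qL Lt b₀ ≤ qL Lt (L c + t • b₀ - L a) := by
        intro a
        have heq : L c + t • b₀ - L (a : B) = L (c - (a : B)) + t • b₀ := by
          rw [map_sub]; abel
        have h2 : Lt (L (c - (a : B))) (t • b₀) = t * b₀ (c - (a : B)) := by
          rw [LtL, ContinuousLinearMap.smul_apply, smul_eq_mul]
        have h3 : b₀ (c - (a : B)) = b₀ c := by
          rw [map_sub, hb0A (a : B) a.2, sub_zero]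
        rw [heq, qL_add Lt hsymt, hqLL, h2, qL_smul Lt t b₀, h3]
        have := hposc (a : B) a.2
        linarith
      exact (le_ciInf h1).trans (hii (L c + t • b₀))
    exact arith_pos hbc key
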